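/- Let X be a finite set, C a concept class on X, μ a probability measure on X with μ(x) > 0 for all x ∈ X. For distinct concepts A, B ∈ C, let Δ(A,B) = {x ∈ X : A(x) ≠ B(x)} and let d(A,B) = Σ_{a ∈ Δ(A,B)} (μ(a)/μ(Δ(A,B))) · (Ldim(C) − Ldim(C_{a = B(a)})). Then for any two distinct A, B ∈ C, d(A,B) + d(B,A) ≥ 1. -/

import Mathlib

/-!
Definitions for query learning: concepts are total functions `X → Bool`,
partially specified subsets are functions `X → Option Bool`.
-/

/-- A total concept `f` extends the partially specified subset `A`
(i.e. agrees with `A` on its domain). -/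
def PExtends {X : Type*} (f : X → Bool) (A : X → Option Bool) : Prop :=
  ∀ x b, A x = some b → f x = b

/-- `A` is `n`-consistent with `C`: every restriction of `A` of size at most `n`
has an extension in `C`. -/
def NConsistent {X : Type*} (C : Set (X → Bool)) (A : X → Option Bool) (n : ℕ) : Prop :=
  ∀ s : Finset X, s.card ≤ n → ∃ f ∈ C, ∀ x ∈ s, ∀ b, A x = some b → f x = b

/-- `A` is finitely consistent with `C`: every finite restriction of `A`
has an extension in `C`. -/
def FinitelyConsistent {X : Type*} (C : Set (X → Bool)) (A : X → Option Bool) : Prop :=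
  ∀ s : Finset X, ∃ f ∈ C, ∀ x ∈ s, ∀ b, A x = some b → f x = b

/-- There is a complete binary tree of height `d`, with internal nodes labelled by
elements of `X` (here indexed by the binary path leading to the node), whose leaves
can each be properly labelled by a concept of `C` agreeing with the root-to-leaf path. -/
def LdimGe {X : Type*} (C : Set (X → Bool)) (d : ℕ) : Prop :=
  ∃ t : List Bool → X, ∀ σ : List Bool, σ.length = d →
    ∃ f ∈ C, ∀ k, k < d → f (t (σ.take k)) = σ.getD k false

/-- The Littlestone dimension of `C`, valued in `ℕ∞` (`⊤` = no maximum exists). -/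
noncomputable def Ldim {X : Type*} (C : Set (X → Bool)) : ℕ∞ :=
  sSup {n : ℕ∞ | ∃ d : ℕ, n = d ∧ LdimGe C d}

/-- `xs` is a valid sequence of counterexamples that an adversarial teacher with
target concept `A` can return against the learner strategy `s` (the learner's next
hypothesis is a function of the list of counterexamples received so far). -/
def ValidEQPlay {X : Type*} (A : X → Bool) (s : List X → (X → Bool)) (xs : List X) : Prop :=
  ∀ (i : ℕ) (h : i < xs.length),
    s (xs.take i) (xs.get ⟨i, h⟩) ≠ A (xs.get ⟨i, h⟩)

/-- Some learner strategy with hypotheses from `H` identifies every concept of `C`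
in at most `n` equivalence queries, against every teacher. -/
def EQLearnIn {X : Type*} (C H : Set (X → Bool)) (n : ℕ) : Prop :=
  ∃ s : List X → (X → Bool), (∀ l, s l ∈ H) ∧
    ∀ A ∈ C, ∀ xs : List X, ValidEQPlay A s xs → xs.length < n

/-- The equivalence-query learning complexity `LC^EQ(C, H)`, valued in `ℕ∞`. -/
noncomputable def LCEQ {X : Type*} (C H : Set (X → Bool)) : ℕ∞ :=
  sInf {n : ℕ∞ | ∃ m : ℕ, n = m ∧ EQLearnIn C H m}

/-- `xs` is a valid play of a teacher with target `A` against the EQ+MQ learner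
strategy `s`: the history records pairs `(x, A x)`; at each step, if the learner
makes the membership query `x` the teacher answers `(x, A x)`, and if the learner
makes an equivalence query `B` the teacher returns a counterexample to `B`. -/
def ValidEMPlay {X : Type*} (A : X → Bool) (s : List (X × Bool) → X ⊕ (X → Bool))
    (xs : List (X × Bool)) : Prop :=
  ∀ (i : ℕ) (h : i < xs.length),
    (xs.get ⟨i, h⟩).2 = A (xs.get ⟨i, h⟩).1 ∧
    (∀ x, s (xs.take i) = Sum.inl x → (xs.get ⟨i, h⟩).1 = x) ∧
    (∀ B, s (xs.take i) = Sum.inr B → B (xs.get ⟨i, h⟩).1 ≠ A (xs.get ⟨i, h⟩).1)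

/-- Some learner strategy making membership queries on elements of `X` and
equivalence queries from `H` identifies every concept of `C` in at most `n`
queries in total, against every teacher. -/
def EMLearnIn {X : Type*} (C H : Set (X → Bool)) (n : ℕ) : Prop :=
  ∃ s : List (X × Bool) → X ⊕ (X → Bool),
    (∀ l B, s l = Sum.inr B → B ∈ H) ∧
    ∀ A ∈ C, ∀ xs : List (X × Bool), ValidEMPlay A s xs → xs.length < n

/-- The EQ+MQ learning complexity `LC^{EQ+MQ}(C, H)`, valued in `ℕ∞`. -/
noncomputable def LCEM {X : Type*} (C H : Set (X → Bool)) : ℕ∞ :=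
  sInf {n : ℕ∞ | ∃ m : ℕ, n = m ∧ EMLearnIn C H m}

/-- Every total function `X → Bool` that is `n`-consistent with `C` belongs to `H`. -/
def CDimLe {X : Type*} (C H : Set (X → Bool)) (n : ℕ) : Prop :=
  ∀ A : X → Bool, NConsistent C (fun x => some (A x)) n → A ∈ H

/-- The consistency dimension `C(C, H)`, valued in `ℕ∞`. -/
noncomputable def CDim {X : Type*} (C H : Set (X → Bool)) : ℕ∞ :=
  sInf {n : ℕ∞ | ∃ m : ℕ, n = m ∧ CDimLe C H m}

/-- Every partially specified subset that is `n`-consistent with `C` has a total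
extension in `H`. -/
def SCDimLe {X : Type*} (C H : Set (X → Bool)) (n : ℕ) : Prop :=
  ∀ A : X → Option Bool, NConsistent C A n → ∃ B ∈ H, PExtends B A

/-- The strong consistency dimension `SC(C, H)`, valued in `ℕ∞`. -/
noncomputable def SCDim {X : Type*} (C H : Set (X → Bool)) : ℕ∞ :=
  sInf {n : ℕ∞ | ∃ m : ℕ, n = m ∧ SCDimLe C H m}

/-- The weight `d(A,B)` of the directed edge from `A` to `B` in the thicket query
graph: the expected value of `Ldim C − Ldim C_{x = B(x)}` for `x` drawn from `μ`
conditioned on the symmetric difference `Δ(A,B)`. -/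
noncomputable def edgeWeight {X : Type*} [Fintype X] (C : Set (X → Bool))
    (μ : X → ℝ) (A B : X → Bool) : ℝ :=
  ∑ a ∈ Finset.univ.filter (fun x => A x ≠ B x),
    (μ a / ∑ b ∈ Finset.univ.filter (fun x => A x ≠ B x), μ b) *
      (((Ldim C).toNat : ℝ) - ((Ldim {f ∈ C | f a = B a}).toNat : ℝ))

/-- Natural-number version of the Littlestone dimension. -/
noncomputable def LdimN {X : Type*} (C : Set (X → Bool)) : ℕ :=
  sSup {d : ℕ | LdimGe C d}

lemma ldimge_zero {X : Type*} [Nonempty X] {C : Set (X → Bool)} {f : X → Bool}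
    (hf : f ∈ C) : LdimGe C 0 :=
  ⟨fun _ => Classical.arbitrary X, fun _ _ =>
    ⟨f, hf, fun k hk => absurd hk (Nat.not_lt_zero k)⟩⟩

lemma ldimge_mono {X : Type*} {C C' : Set (X → Bool)} (h : C' ⊆ C) {d : ℕ}
    (hd : LdimGe C' d) : LdimGe C d := by
  obtain ⟨t, ht⟩ := hd
  exact ⟨t, fun σ hσ => by
    obtain ⟨f, hf, hspec⟩ := ht σ hσ
    exact ⟨f, h hf, hspec⟩⟩

lemma ldimge_le_card {X : Type*} [Fintype X] {C : Set (X → Bool)} {d : ℕ}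
    (h : LdimGe C d) : d ≤ Fintype.card X := by
  classical
  obtain ⟨t, ht⟩ := h
  have hchoice : ∀ σ : Fin d → Bool, ∃ f : X → Bool, f ∈ C ∧
      ∀ k (hk : k < d), f (t ((List.ofFn σ).take k)) = σ ⟨k, hk⟩ := by
    intro σ
    obtain ⟨f, hf, hspec⟩ := ht (List.ofFn σ) List.length_ofFn
    refine ⟨f, hf, fun k hk => ?_⟩
    have := hspec k hk
    rwa [List.getD_eq_getElem _ _ (by simp [hk]), List.getElem_ofFn] at this
  choose F hFC hF using hchoice
  have hinj : Function.Injective F := by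
    intro σ σ' hFeq
    by_contra hne
    have hex : ∃ k, ∃ hk : k < d, σ ⟨k, hk⟩ ≠ σ' ⟨k, hk⟩ := by
      obtain ⟨⟨k, hk⟩, hkne⟩ := Function.ne_iff.mp hne
      exact ⟨k, hk, hkne⟩
    obtain ⟨hk, hkne⟩ := Nat.find_spec hex
    set k := Nat.find hex with hkdef
    have htake : (List.ofFn σ).take k = (List.ofFn σ').take k := by
      apply List.ext_getElem (by simp)
      intro i h1 h2
      simp only [List.getElem_take, List.getElem_ofFn]
      have hik : i < k := by
        have := h1
        simp only [List.length_take, List.length_ofFn] at this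
        omega
      have := Nat.find_min hex hik
      push_neg at this
      exact this _
    have e1 := hF σ k hk
    have e2 := hF σ' k hk
    rw [hFeq, htake, e2] at e1
    exact hkne e1.symm
  have hcard : Fintype.card (Fin d → Bool) ≤ Fintype.card (X → Bool) :=
    Fintype.card_le_of_injective F hinj
  simp only [Fintype.card_fun, Fintype.card_fin, Fintype.card_bool] at hcard
  exact (Nat.pow_le_pow_iff_right (by norm_num : 1 < 2)).mp hcard

lemma ldimD_bdd {X : Type*} [Fintype X] (C : Set (X → Bool)) :
    BddAbove {d : ℕ | LdimGe C d} :=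
  ⟨Fintype.card X, fun _ hd => ldimge_le_card hd⟩

lemma ldimge_ldimN {X : Type*} [Fintype X] [Nonempty X] {C : Set (X → Bool)}
    {f : X → Bool} (hf : f ∈ C) : LdimGe C (LdimN C) := by
  have h0 : (0 : ℕ) ∈ {d : ℕ | LdimGe C d} := ldimge_zero hf
  exact Nat.sSup_mem ⟨0, h0⟩ (ldimD_bdd C)

lemma ldim_eq_ldimN {X : Type*} [Fintype X] [Nonempty X] {C : Set (X → Bool)}
    {f : X → Bool} (hf : f ∈ C) : Ldim C = (LdimN C : ℕ∞) := by
  apply le_antisymm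
  · apply sSup_le
    rintro n ⟨d, rfl, hd⟩
    exact_mod_cast Nat.cast_le.mpr (le_csSup (ldimD_bdd C) hd)
  · exact le_sSup ⟨LdimN C, rfl, ldimge_ldimN hf⟩

lemma ldimN_mono {X : Type*} [Fintype X] [Nonempty X] {C C' : Set (X → Bool)}
    (h : C' ⊆ C) {f : X → Bool} (hf : f ∈ C') : LdimN C' ≤ LdimN C :=
  csSup_le_csSup (ldimD_bdd C) ⟨0, ldimge_zero hf⟩ (fun _ hd => ldimge_mono h hd)

lemma ldimge_combine {X : Type*} {C : Set (X → Bool)} {x : X} {d : ℕ}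
    (h0 : LdimGe {f ∈ C | f x = false} d) (h1 : LdimGe {f ∈ C | f x = true} d) :
    LdimGe C (d + 1) := by
  obtain ⟨t0, ht0⟩ := h0
  obtain ⟨t1, ht1⟩ := h1
  refine ⟨fun σ => match σ with
    | [] => x
    | (b :: rest) => (if b then t1 else t0) rest, ?_⟩
  intro σ hσ
  match σ with
  | [] => simp at hσ
  | (b :: rest) =>
    have hrest : rest.length = d := by simpa using hσ
    cases b with
    | false =>
      obtain ⟨f, ⟨hfC, hfx⟩, hspec⟩ := ht0 rest hrest
      refine ⟨f, hfC, fun k hk => ?_⟩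
      match k with
      | 0 => simpa using hfx
      | (j + 1) =>
        have hj : j < d := by omega
        simpa using hspec j hj
    | true =>
      obtain ⟨f, ⟨hfC, hfx⟩, hspec⟩ := ht1 rest hrest
      refine ⟨f, hfC, fun k hk => ?_⟩
      match k with
      | 0 => simpa using hfx
      | (j + 1) =>
        have hj : j < d := by omega
        simpa using hspec j hj

lemma key_ineq {X : Type*} [Fintype X] [Nonempty X] {C : Set (X → Bool)}
    {A B : X → Bool} (hA : A ∈ C) (hB : B ∈ C) {a : X} (hab : A a ≠ B a) :
    LdimN {f ∈ C | f a = B a} + LdimN {f ∈ C | f a = A a} + 1 ≤ 2 * LdimN C := by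
  set n := LdimN C with hn
  set nB := LdimN {f ∈ C | f a = B a} with hnB
  set nA := LdimN {f ∈ C | f a = A a} with hnA
  clear_value n nB nA
  have hBmem : B ∈ {f ∈ C | f a = B a} := ⟨hB, rfl⟩
  have hAmem : A ∈ {f ∈ C | f a = A a} := ⟨hA, rfl⟩
  have hBle : nB ≤ n := by
    rw [hnB, hn]; exact ldimN_mono (fun f hf => hf.1) hBmem
  have hAle : nA ≤ n := by
    rw [hnA, hn]; exact ldimN_mono (fun f hf => hf.1) hAmem
  by_contra hcon
  have hBeq : nB = n := by clear hn hnB hnA; omega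
  have hAeq : nA = n := by clear hn hnB hnA; omega
  have hgB : LdimGe {f ∈ C | f a = B a} n := by
    rw [← hBeq, hnB]; exact ldimge_ldimN hBmem
  have hgA : LdimGe {f ∈ C | f a = A a} n := by
    rw [← hAeq, hnA]; exact ldimge_ldimN hAmem
  have hC1 : LdimGe C (n + 1) := by
    cases hBa : B a with
    | false =>
      have hAa : A a = true := by
        cases hAa : A a
        · exact absurd (hAa.trans hBa.symm) hab
        · rfl
      rw [hBa] at hgB; rw [hAa] at hgA
      exact ldimge_combine hgB hgA
    | true =>
      have hAa : A a = false := by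
        cases hAa : A a
        · rfl
        · exact absurd (hAa.trans hBa.symm) hab
      rw [hBa] at hgB; rw [hAa] at hgA
      exact ldimge_combine hgA hgB
  have : n + 1 ≤ n := by
    rw [hn] at hC1 ⊢
    have hmem : LdimN C + 1 ∈ {d : ℕ | LdimGe C d} := hC1
    exact le_csSup (ldimD_bdd C) hmem
  exact Nat.not_succ_le_self n this

theorem stmt_17 {X : Type*} [Fintype X] (C : Set (X → Bool)) (μ : X → ℝ)
    (hpos : ∀ x, 0 < μ x) (hsum : ∑ x, μ x = 1)
    (A B : X → Bool) (hA : A ∈ C) (hB : B ∈ C) (hAB : A ≠ B) :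
    1 ≤ edgeWeight C μ A B + edgeWeight C μ B A := by
  classical
  obtain ⟨x0, hx0⟩ := Function.ne_iff.mp hAB
  have : Nonempty X := ⟨x0⟩
  set Δ := Finset.univ.filter (fun x => A x ≠ B x) with hΔ
  have hΔsym : Finset.univ.filter (fun x => B x ≠ A x) = Δ := by
    simp only [hΔ]
    apply Finset.filter_congr
    intro x _
    simp [ne_comm]
  have hΔne : (Δ : Finset X).Nonempty := ⟨x0, by simp [hΔ, hx0]⟩
  set S := ∑ b ∈ Δ, μ b with hS
  have hSpos : 0 < S := Finset.sum_pos (fun i _ => hpos i) hΔne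
  have hedge : edgeWeight C μ A B + edgeWeight C μ B A =
      ∑ a ∈ Δ, (μ a / S) *
        ((((Ldim C).toNat : ℝ) - ((Ldim {f ∈ C | f a = B a}).toNat : ℝ)) +
         (((Ldim C).toNat : ℝ) - ((Ldim {f ∈ C | f a = A a}).toNat : ℝ))) := by
    unfold edgeWeight
    rw [hΔsym]
    rw [← Finset.sum_add_distrib]
    apply Finset.sum_congr rfl
    intro a _
    ring
  rw [hedge]
  have h1 : (1 : ℝ) = ∑ a ∈ Δ, μ a / S := by
    rw [← Finset.sum_div, ← hS, div_self (ne_of_gt hSpos)]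
  rw [h1]
  apply Finset.sum_le_sum
  intro a ha
  have hab : A a ≠ B a := by
    simp only [hΔ, Finset.mem_filter] at ha
    exact ha.2
  have hμS : 0 < μ a / S := div_pos (hpos a) hSpos
  apply le_mul_of_one_le_right (le_of_lt hμS)
  -- the key inequality
  have hkey := key_ineq hA hB hab
  have hBmem : B ∈ {f ∈ C | f a = B a} := ⟨hB, rfl⟩
  have hAmem : A ∈ {f ∈ C | f a = A a} := ⟨hA, rfl⟩
  rw [ldim_eq_ldimN hA, ldim_eq_ldimN hBmem, ldim_eq_ldimN hAmem]
  simp only [ENat.toNat_coe]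
  have hBle : LdimN {f ∈ C | f a = B a} ≤ LdimN C :=
    ldimN_mono (fun f hf => hf.1) hBmem
  have hAle : LdimN {f ∈ C | f a = A a} ≤ LdimN C :=
    ldimN_mono (fun f hf => hf.1) hAmem
  have h2 : (LdimN {f ∈ C | f a = B a} : ℝ) + (LdimN {f ∈ C | f a = A a} : ℝ) + 1
      ≤ 2 * (LdimN C : ℝ) := by exact_mod_cast hkey
  linarith
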